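/- arXiv:2009.05223 — 4 statements merged into one kernel-verified Lean document; each statement's English description precedes it below -/
import Mathlib

section
/- Let f, g ∈ ℚ[t] be coprime polynomials, not both constant. Then for every prime p there exists a constant c_p > 0 such that for all t ∈ ℚ, max(|f(t)|_p, |g(t)|_p) ≥ c_p, where |·|_p is the p-adic absolute value. -/
open Polynomial

private lemma psum_le {p : ℕ} [Fact p.Prime] {ι : Type*} (s : Finset ι) (F : ι → ℚ)
    {B : ℚ} (hB : 0 ≤ B) (h : ∀ i ∈ s, padicNorm p (F i) ≤ B) :
    padicNorm p (∑ i ∈ s, F i) ≤ B := by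
  classical
  induction s using Finset.induction_on with
  | empty => simpa using hB
  | @insert a s hi ih =>
    rw [Finset.sum_insert hi]
    exact le_trans padicNorm.nonarchimedean
      (max_le (h a (by simp)) (ih fun i his => h i (by simp [his])))

private lemma pnorm_pow {p : ℕ} [Fact p.Prime] (q : ℚ) (n : ℕ) :
    padicNorm p (q ^ n) = padicNorm p q ^ n := by
  induction n with
  | zero => simp [padicNorm.one]
  | succ n ih => rw [pow_succ, padicNorm.mul, ih, pow_succ]

private lemma bound_aux (p : ℕ) [Fact p.Prime] (a : Polynomial ℚ) :
    ∃ C : ℚ, 0 < C ∧ ∀ t : ℚ,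
      padicNorm p (a.eval t) ≤ C * max 1 (padicNorm p t) ^ a.natDegree := by
  set n := a.natDegree
  refine ⟨1 + ∑ i ∈ Finset.range (n + 1), padicNorm p (a.coeff i), add_pos_of_pos_of_nonneg one_pos (Finset.sum_nonneg fun j _ => padicNorm.nonneg _), fun t => ?_⟩
  have hcoef : ∀ i ∈ Finset.range (n + 1),
      padicNorm p (a.coeff i) ≤ 1 + ∑ j ∈ Finset.range (n + 1), padicNorm p (a.coeff j) := by
    intro i hi
    have h1 : padicNorm p (a.coeff i) ≤ ∑ j ∈ Finset.range (n + 1), padicNorm p (a.coeff j) :=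
      Finset.single_le_sum (f := fun j => padicNorm p (a.coeff j))
        (fun j _ => padicNorm.nonneg _) hi
    linarith
  have hmax1 : (1 : ℚ) ≤ max 1 (padicNorm p t) := le_max_left _ _
  rw [Polynomial.eval_eq_sum_range]
  refine psum_le _ _ (mul_nonneg (add_nonneg zero_le_one (Finset.sum_nonneg fun j _ => padicNorm.nonneg _)) (pow_nonneg (le_trans zero_le_one hmax1) _)) fun i hi => ?_
  rw [padicNorm.mul]
  have h2 : padicNorm p (t ^ i) ≤ max 1 (padicNorm p t) ^ n := by
    rw [pnorm_pow]
    calc padicNorm p t ^ i ≤ max 1 (padicNorm p t) ^ i :=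
          pow_le_pow_left₀ (padicNorm.nonneg _) (le_max_right _ _) _
      _ ≤ max 1 (padicNorm p t) ^ n :=
          pow_le_pow_right₀ hmax1 (Nat.lt_succ_iff.mp (Finset.mem_range.mp hi))
  exact mul_le_mul (hcoef i hi) h2 (padicNorm.nonneg _) (add_nonneg zero_le_one (Finset.sum_nonneg fun j _ => padicNorm.nonneg _))

private lemma big_aux (p : ℕ) [Fact p.Prime] (h : Polynomial ℚ) (hn : 0 < h.natDegree) :
    ∃ M : ℚ, 1 ≤ M ∧ ∀ t : ℚ, M < padicNorm p t → 1 ≤ padicNorm p (h.eval t) := by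
  have hne : h ≠ 0 := fun h0 => by simp [h0] at hn
  have hlc : h.leadingCoeff ≠ 0 := Polynomial.leadingCoeff_ne_zero.mpr hne
  set L := padicNorm p h.leadingCoeff with hL
  have hLpos : 0 < L := by
    rcases lt_or_eq_of_le (padicNorm.nonneg (p := p) h.leadingCoeff) with h1 | h1
    · exact h1
    · exact absurd (padicNorm.zero_of_padicNorm_eq_zero h1.symm) hlc
  obtain ⟨C, hCpos, hC⟩ := bound_aux p h.eraseLead
  refine ⟨max 1 (max (C / L) (1 / L)), le_max_left _ _, fun t ht => ?_⟩
  have ht1 : (1 : ℚ) < padicNorm p t := lt_of_le_of_lt (le_max_left _ _) ht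
  have htpos : 0 < padicNorm p t := lt_trans one_pos ht1
  have htCL : C / L < padicNorm p t := lt_of_le_of_lt (le_trans (le_max_left _ _) (le_max_right _ _)) ht
  have htL : 1 / L < padicNorm p t := lt_of_le_of_lt (le_trans (le_max_right _ _) (le_max_right _ _)) ht
  set n := h.natDegree
  -- bound on eraseLead eval
  have hdle : h.eraseLead.natDegree ≤ n - 1 := Polynomial.eraseLead_natDegree_le h
  have herase : padicNorm p (h.eraseLead.eval t) ≤ C * padicNorm p t ^ (n - 1) := by
    refine le_trans (hC t) ?_
    rw [max_eq_right ht1.le]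
    exact mul_le_mul_of_nonneg_left (pow_le_pow_right₀ ht1.le hdle) hCpos.le
  have hlead : padicNorm p (h.leadingCoeff * t ^ n) = L * padicNorm p t ^ n := by
    rw [padicNorm.mul, pnorm_pow]
  have hlt : C * padicNorm p t ^ (n - 1) < L * padicNorm p t ^ n := by
    have hnn : n = (n - 1) + 1 := (Nat.succ_pred_eq_of_pos hn).symm
    have hCLt : C < L * padicNorm p t := by
      rw [div_lt_iff₀ hLpos] at htCL; linarith [htCL]
    have hp2 : padicNorm p t ^ n = padicNorm p t ^ (n - 1) * padicNorm p t := by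
      rw [← pow_succ, ← hnn]
    calc C * padicNorm p t ^ (n - 1)
        < (L * padicNorm p t) * padicNorm p t ^ (n - 1) :=
          mul_lt_mul_of_pos_right hCLt (pow_pos htpos _)
      _ = L * padicNorm p t ^ n := by rw [hp2]; ring
  have hsplit : h.eval t = h.eraseLead.eval t + h.leadingCoeff * t ^ n := by
    have := congrArg (Polynomial.eval t) (Polynomial.eraseLead_add_C_mul_X_pow h)
    rw [Polynomial.eval_add, Polynomial.eval_mul, Polynomial.eval_C, Polynomial.eval_pow,
      Polynomial.eval_X] at this
    exact this.symm
  rw [hsplit, padicNorm.add_eq_max_of_ne (by rw [hlead]; exact ne_of_lt (lt_of_le_of_lt herase hlt))]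
  rw [hlead, max_eq_right (le_of_lt (lt_of_le_of_lt herase hlt))]
  have h1L : 1 < L * padicNorm p t := by
    rw [div_lt_iff₀ hLpos] at htL; linarith [htL]
  calc (1 : ℚ) ≤ L * padicNorm p t := h1L.le
    _ ≤ L * padicNorm p t ^ n := by
        refine mul_le_mul_of_nonneg_left ?_ hLpos.le
        exact le_self_pow₀ ht1.le hn.ne'
    _ = L * padicNorm p t ^ n := rfl

private lemma key (p : ℕ) [Fact p.Prime] (f g : Polynomial ℚ) (hfg : IsCoprime f g)
    (hf : 0 < f.natDegree) :
    ∃ c : ℚ, 0 < c ∧ ∀ t : ℚ, c ≤ max (padicNorm p (f.eval t)) (padicNorm p (g.eval t)) := by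
  obtain ⟨u, v, huv⟩ := hfg
  obtain ⟨Cu, hCu0, hCu⟩ := bound_aux p u
  obtain ⟨Cv, hCv0, hCv⟩ := bound_aux p v
  obtain ⟨M, hM1, hM⟩ := big_aux p f hf
  set C := max Cu Cv with hCdef
  have hC0 : 0 < C := lt_of_lt_of_le hCu0 (le_max_left _ _)
  set D := max u.natDegree v.natDegree with hDdef
  have hMD : (0:ℚ) < C * M ^ D := by positivity
  refine ⟨min 1 (1 / (C * M ^ D)), by positivity, fun t => ?_⟩
  rcases le_or_gt (padicNorm p t) M with hcase | hcase
  · -- small t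
    have hmaxM : max 1 (padicNorm p t) ≤ M := max_le hM1 hcase
    have hub : ∀ (w : Polynomial ℚ) (Cw : ℚ), 0 < Cw →
        (∀ s, padicNorm p (w.eval s) ≤ Cw * max 1 (padicNorm p s) ^ w.natDegree) →
        Cw ≤ C → w.natDegree ≤ D → padicNorm p (w.eval t) ≤ C * M ^ D := by
      intro w Cw hCw hw hle hdle
      refine le_trans (hw t) ?_
      refine mul_le_mul hle ?_ (by positivity) hC0.le
      calc max 1 (padicNorm p t) ^ w.natDegree ≤ M ^ w.natDegree :=
            pow_le_pow_left₀ (le_trans zero_le_one (le_max_left _ _)) hmaxM _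
        _ ≤ M ^ D := pow_le_pow_right₀ hM1 hdle
    have hu := hub u Cu hCu0 hCu (le_max_left _ _) (le_max_left _ _)
    have hv := hub v Cv hCv0 hCv (le_max_right _ _) (le_max_right _ _)
    have heval : u.eval t * f.eval t + v.eval t * g.eval t = 1 := by
      have := congrArg (Polynomial.eval t) huv
      simpa using this
    have h1 : (1:ℚ) = padicNorm p (u.eval t * f.eval t + v.eval t * g.eval t) := by
      rw [heval]; exact (padicNorm.one).symm
    set X := max (padicNorm p (f.eval t)) (padicNorm p (g.eval t)) with hX
    have hX0 : 0 ≤ X := le_trans (padicNorm.nonneg _) (le_max_left _ _)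
    have h2 : (1:ℚ) ≤ C * M ^ D * X := by
      rw [h1]
      refine le_trans padicNorm.nonarchimedean (max_le ?_ ?_)
      · rw [padicNorm.mul]
        exact mul_le_mul hu (le_max_left _ _) (padicNorm.nonneg _) (by positivity)
      · rw [padicNorm.mul]
        exact mul_le_mul hv (le_max_right _ _) (padicNorm.nonneg _) (by positivity)
    have : 1 / (C * M ^ D) ≤ X := by
      rw [div_le_iff₀ hMD]; linarith [h2]
    exact le_trans (min_le_right _ _) this
  · -- large t
    refine le_trans (min_le_left _ _) (le_trans (hM t hcase) (le_max_left _ _))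

/-- For coprime `f, g ∈ ℚ[t]`, not both constant, and every prime `p`, there is a
constant `c_p > 0` such that `max(|f(t)|_p, |g(t)|_p) ≥ c_p` for all `t ∈ ℚ`. -/
theorem stmt_0 (f g : Polynomial ℚ) (hfg : IsCoprime f g)
    (hdeg : 0 < max f.natDegree g.natDegree) (p : ℕ) (hp : p.Prime) :
    ∃ c : ℚ, 0 < c ∧ ∀ t : ℚ, c ≤ max (padicNorm p (f.eval t)) (padicNorm p (g.eval t)) := by
  haveI : Fact p.Prime := ⟨hp⟩
  rcases lt_max_iff.mp hdeg with hf | hg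
  · exact key p f g hfg hf
  · obtain ⟨c, hc0, hc⟩ := key p g f hfg.symm hg
    exact ⟨c, hc0, fun t => by rw [max_comm]; exact hc t⟩
end

section
/- For the multiplicative function B⁽⁴⁾ with B⁽⁴⁾(p^k) = 4k+1 if p ≡ 1 (mod 4) and B⁽⁴⁾(p^k) = 1 otherwise, the Dirichlet series ∑_{n ≥ 1} B⁽⁴⁾(n)/n^s converges for real s > 1 and satisfies ∑_{n ≥ 1} B⁽⁴⁾(n)/n^s = ζ(s) · ∏_{p ≡ 1 mod 4} (1 + 3p^{-s})/(1 - p^{-s}). -/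
/-- `B⁽⁴⁾(n) = ∏_{p^k ∥ n, p ≡ 1 mod 4} (4k + 1)`. -/
def B4 (n : ℕ) : ℕ :=
  ∏ p ∈ n.primeFactors.filter (fun p => p % 4 = 1), (4 * n.factorization p + 1)

open ArithmeticFunction LSeries Complex Finset
open scoped ArithmeticFunction.zeta

namespace B4Aux

/-- `B4` as an arithmetic function. -/
def B4A : ArithmeticFunction ℕ := ⟨fun n => if n = 0 then 0 else B4 n, if_pos rfl⟩

lemma B4A_apply {n : ℕ} (hn : n ≠ 0) : B4A n = B4 n := if_neg hn

/-- The multiplicative function with `G(p^k) = 4` if `p ≡ 1 [MOD 4]`, `0` otherwise. -/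
def G : ArithmeticFunction ℕ := prodPrimeFactors (fun p => if p % 4 = 1 then 4 else 0)

/-- The 4-fold Dirichlet convolution of `ζ` with itself. -/
def Z4 : ArithmeticFunction ℕ := ζ * ζ * ζ * ζ

lemma hG : G.IsMultiplicative := ArithmeticFunction.IsMultiplicative.prodPrimeFactors _

lemma hZ4 : Z4.IsMultiplicative :=
  ((isMultiplicative_zeta.mul isMultiplicative_zeta).mul isMultiplicative_zeta).mul
    isMultiplicative_zeta

lemma B4_one : B4 1 = 1 := by simp [B4]

lemma factorization_eq_zero_of_not_mem {n p : ℕ} (h : p ∉ n.primeFactors) :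
    n.factorization p = 0 := by
  rwa [← Nat.support_factorization, Finsupp.notMem_support_iff] at h

lemma hB4A : B4A.IsMultiplicative := by
  rw [ArithmeticFunction.IsMultiplicative.iff_ne_zero]
  refine ⟨by simp [B4A_apply one_ne_zero, B4_one], ?_⟩
  intro m n hm hn hmn
  rw [B4A_apply (mul_ne_zero hm hn), B4A_apply hm, B4A_apply hn]
  unfold B4
  rw [Nat.primeFactors_mul hm hn, Finset.filter_union,
    Finset.prod_union (Finset.disjoint_filter_filter hmn.disjoint_primeFactors)]
  congr 1
  · refine Finset.prod_congr rfl fun p hp => ?_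
    simp only [Finset.mem_filter] at hp
    rw [Nat.factorization_mul hm hn, Finsupp.add_apply,
      factorization_eq_zero_of_not_mem
        (Finset.disjoint_left.mp hmn.disjoint_primeFactors hp.1), add_zero]
  · refine Finset.prod_congr rfl fun p hp => ?_
    simp only [Finset.mem_filter] at hp
    rw [Nat.factorization_mul hm hn, Finsupp.add_apply,
      factorization_eq_zero_of_not_mem
        (Finset.disjoint_right.mp hmn.disjoint_primeFactors hp.1), zero_add]

lemma B4_pp {p k : ℕ} (hp : p.Prime) : B4 (p ^ k) = if p % 4 = 1 then 4 * k + 1 else 1 := by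
  rcases Nat.eq_zero_or_pos k with rfl | hk
  · simp [B4_one]
  · unfold B4
    rw [Nat.primeFactors_prime_pow hk.ne' hp, Nat.Prime.factorization_pow hp]
    by_cases h4 : p % 4 = 1
    · rw [if_pos h4, Finset.filter_singleton, if_pos h4, Finset.prod_singleton,
        Finsupp.single_eq_same]
    · rw [if_neg h4, Finset.filter_singleton, if_neg h4, Finset.prod_empty]

lemma G_pp {p k : ℕ} (hp : p.Prime) (hk : k ≠ 0) : G (p ^ k) = if p % 4 = 1 then 4 else 0 := by
  rw [G, prodPrimeFactors_apply (pow_ne_zero k hp.pos.ne'),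
    Nat.primeFactors_prime_pow hk hp, Finset.prod_singleton]

lemma Z2_p {p : ℕ} (hp : p.Prime) : (ζ * ζ : ArithmeticFunction ℕ) p = 2 := by
  rw [mul_zeta_apply, hp.divisors, Finset.sum_pair hp.one_lt.ne,
    zeta_apply_ne one_ne_zero, zeta_apply_ne hp.pos.ne']

lemma Z3_p {p : ℕ} (hp : p.Prime) : (ζ * ζ * ζ : ArithmeticFunction ℕ) p = 3 := by
  rw [mul_zeta_apply, hp.divisors, Finset.sum_pair hp.one_lt.ne,
    (isMultiplicative_zeta.mul isMultiplicative_zeta).map_one, Z2_p hp]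

lemma Z4_pp_ge {p k : ℕ} (hp : p.Prime) (hk : k ≠ 0) : 4 ≤ Z4 (p ^ k) := by
  have hne : p ^ k ≠ 0 := pow_ne_zero k hp.pos.ne'
  have hsub : ({1, p} : Finset ℕ) ⊆ (p ^ k).divisors := by
    intro d hd
    rcases Finset.mem_insert.mp hd with rfl | hd
    · exact Nat.one_mem_divisors.mpr hne
    · rw [Finset.mem_singleton] at hd
      rw [hd]
      exact Nat.mem_divisors.mpr ⟨dvd_pow_self p hk, hne⟩
  calc (4 : ℕ) = ∑ d ∈ ({1, p} : Finset ℕ), (ζ * ζ * ζ : ArithmeticFunction ℕ) d := by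
        rw [Finset.sum_pair hp.one_lt.ne,
          ((isMultiplicative_zeta.mul isMultiplicative_zeta).mul isMultiplicative_zeta).map_one,
          Z3_p hp]
    _ ≤ ∑ d ∈ (p ^ k).divisors, (ζ * ζ * ζ : ArithmeticFunction ℕ) d :=
        Finset.sum_le_sum_of_subset hsub
    _ = Z4 (p ^ k) := (mul_zeta_apply).symm

lemma G_le_Z4 (n : ℕ) : G n ≤ Z4 n := by
  rcases eq_or_ne n 0 with rfl | hn
  · simp
  rw [ArithmeticFunction.IsMultiplicative.multiplicative_factorization _ hG hn,
    ArithmeticFunction.IsMultiplicative.multiplicative_factorization _ hZ4 hn]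
  refine Finset.prod_le_prod' fun p hp => ?_
  have hpp : p.Prime := Nat.prime_of_mem_primeFactors (by rwa [← Nat.support_factorization])
  have hk : n.factorization p ≠ 0 := Finsupp.mem_support_iff.mp hp
  calc G (p ^ n.factorization p) ≤ 4 := by rw [G_pp hpp hk]; split <;> norm_num
    _ ≤ Z4 (p ^ n.factorization p) := Z4_pp_ge hpp hk

lemma B4A_eq : B4A = G * ζ := by
  rw [ArithmeticFunction.IsMultiplicative.eq_iff_eq_on_prime_powers _ hB4A _ (hG.mul isMultiplicative_zeta)]
  intro p k hp
  rw [B4A_apply (pow_ne_zero k hp.pos.ne'), B4_pp hp, mul_zeta_apply,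
    Nat.sum_divisors_prime_pow hp, Finset.sum_range_succ']
  have h0 : G (p ^ 0) = 1 := by rw [pow_zero]; exact hG.map_one
  rw [Finset.sum_congr rfl (fun i _ => G_pp hp (Nat.succ_ne_zero i)), h0,
    Finset.sum_const, Finset.card_range, smul_eq_mul]
  by_cases h4 : p % 4 = 1 <;> simp [h4] <;> omega


/-- `G` as a function `ℕ → ℂ`. -/
noncomputable def Gf : ℕ → ℂ := fun m => (G m : ℂ)

lemma term_natfun (F : ℕ → ℕ) (s : ℝ) (n : ℕ) :
    term (fun m => (F m : ℂ)) (s : ℂ) n =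
      ((if n = 0 then (0 : ℝ) else (F n : ℝ) / (n : ℝ) ^ s : ℝ) : ℂ) := by
  rcases eq_or_ne n 0 with rfl | hn
  · simp
  · rw [term_of_ne_zero hn, if_neg hn, Complex.ofReal_div,
      Complex.ofReal_cpow (Nat.cast_nonneg n), Complex.ofReal_natCast, Complex.ofReal_natCast]

lemma summable_real {F : ℕ → ℕ} {s : ℝ} (h : LSeriesSummable (fun m => (F m : ℂ)) s) :
    Summable (fun n => if n = 0 then (0 : ℝ) else (F n : ℝ) / (n : ℝ) ^ s) := by
  rw [← Complex.summable_ofReal]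
  simpa only [LSeriesSummable, ← term_natfun] using h

lemma pow_cpow_neg {p : ℕ} (s : ℝ) (k : ℕ) :
    ((p : ℂ) ^ (-(s : ℂ))) ^ k = ((p ^ k : ℕ) : ℂ) ^ (-(s : ℂ)) := by
  have h1 : ((p : ℂ)) ^ (-(s : ℂ)) = ((((p : ℝ) ^ (-s) : ℝ)) : ℂ) := by
    rw [Complex.ofReal_cpow (Nat.cast_nonneg p), Complex.ofReal_neg, Complex.ofReal_natCast]
  have h2 : (((p ^ k : ℕ)) : ℂ) ^ (-(s : ℂ)) = ((((p ^ k : ℕ) : ℝ) ^ (-s) : ℝ) : ℂ) := by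
    rw [Complex.ofReal_cpow (Nat.cast_nonneg _), Complex.ofReal_neg, Complex.ofReal_natCast]
  rw [h1, h2, ← Complex.ofReal_pow]
  congr 1
  push_cast
  rw [← Real.rpow_natCast ((p : ℝ) ^ (-s)) k, ← Real.rpow_mul (Nat.cast_nonneg p),
    ← Real.rpow_natCast (p : ℝ) k, ← Real.rpow_mul (Nat.cast_nonneg p)]
  ring_nf

lemma norm_cpow_neg_lt_one {p : ℕ} (hp : 1 < p) {s : ℝ} (hs : 0 < s) :
    ‖(p : ℂ) ^ (-(s : ℂ))‖ < 1 := by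
  have h1 : ((p : ℂ)) ^ (-(s : ℂ)) = ((((p : ℝ) ^ (-s) : ℝ)) : ℂ) := by
    rw [Complex.ofReal_cpow (Nat.cast_nonneg p), Complex.ofReal_neg, Complex.ofReal_natCast]
  rw [h1, Complex.norm_real, Real.norm_eq_abs,
    _root_.abs_of_nonneg (Real.rpow_nonneg (Nat.cast_nonneg p) _)]
  exact Real.rpow_lt_one_of_one_lt_of_neg (by exact_mod_cast hp) (neg_lt_zero.mpr hs)

end B4Aux

/-- The Dirichlet series of `B⁽⁴⁾` converges for real `s > 1` and equals
`ζ(s) · ∏_{p ≡ 1 mod 4} (1 + 3p^{-s})/(1 - p^{-s})`. -/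
theorem stmt_5 (s : ℝ) (hs : 1 < s) :
    Summable (fun n : ℕ => (B4 (n + 1) : ℝ) / ((n : ℝ) + 1) ^ s) ∧
      ∑' n : ℕ, (B4 (n + 1) : ℂ) / ((n : ℂ) + 1) ^ (s : ℂ) =
        riemannZeta s *
          ∏' p : Nat.Primes,
            (if (p : ℕ) % 4 = 1 then
              (1 + 3 * ((p : ℕ) : ℂ) ^ (-(s : ℂ))) / (1 - ((p : ℕ) : ℂ) ^ (-(s : ℂ)))
            else 1) := by
  classical
  have hs1 : 1 < (s : ℂ).re := by simpa using hs
  have hcoe : ∀ f : ArithmeticFunction ℕ,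
      ⇑((f : ArithmeticFunction ℂ)) = fun n => ((f n : ℕ) : ℂ) :=
    fun f => funext fun n => ArithmeticFunction.natCoe_apply
  have hzsum : LSeriesSummable (fun n => ((ζ n : ℕ) : ℂ)) s :=
    LSeriesSummable_zeta_iff.mpr hs1
  have hz' : LSeriesSummable (⇑((ζ : ArithmeticFunction ℕ) : ArithmeticFunction ℂ)) s := by
    rw [hcoe]; exact hzsum
  -- summability of `Z4`
  have hZ4c : LSeriesSummable (⇑((B4Aux.Z4 : ArithmeticFunction ℕ) : ArithmeticFunction ℂ)) s := by
    have h4 : ((B4Aux.Z4 : ArithmeticFunction ℕ) : ArithmeticFunction ℂ) =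
        ↑(ζ : ArithmeticFunction ℕ) * ↑ζ * ↑ζ * ↑ζ := by
      simp only [B4Aux.Z4, ArithmeticFunction.natCoe_mul]
    rw [h4]
    exact ArithmeticFunction.LSeriesSummable_mul
      (ArithmeticFunction.LSeriesSummable_mul (ArithmeticFunction.LSeriesSummable_mul hz' hz') hz')
      hz'
  have hZ4sum : LSeriesSummable (fun m => ((B4Aux.Z4 m : ℕ) : ℂ)) s := by
    rw [← hcoe]; exact hZ4c
  have hZ4real : Summable (fun n => if n = 0 then (0 : ℝ) else (B4Aux.Z4 n : ℝ) / (n : ℝ) ^ s) :=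
    B4Aux.summable_real hZ4sum
  -- norm-summability of the terms of `G`
  have hGnorm : Summable (fun n => ‖term B4Aux.Gf s n‖) := by
    refine hZ4real.of_nonneg_of_le (fun n => norm_nonneg _) (fun n => ?_)
    rw [show B4Aux.Gf = fun m => ((B4Aux.G m : ℕ) : ℂ) from rfl, B4Aux.term_natfun,
      Complex.norm_real, Real.norm_eq_abs]
    rcases eq_or_ne n 0 with rfl | hn
    · simp
    · rw [if_neg hn, if_neg hn, _root_.abs_of_nonneg (by positivity)]
      gcongr
      exact_mod_cast B4Aux.G_le_Z4 n
  have hGsum : LSeriesSummable B4Aux.Gf s := Summable.of_norm hGnorm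
  have hGc : LSeriesSummable (⇑((B4Aux.G : ArithmeticFunction ℕ) : ArithmeticFunction ℂ)) s := by
    rw [hcoe]; exact hGsum
  -- summability of `B4A`
  have hB4Aeqc : ((B4Aux.B4A : ArithmeticFunction ℕ) : ArithmeticFunction ℂ) =
      ↑(B4Aux.G : ArithmeticFunction ℕ) * ↑(ζ : ArithmeticFunction ℕ) := by
    rw [B4Aux.B4A_eq, ArithmeticFunction.natCoe_mul]
  have hB4c : LSeriesSummable (⇑((B4Aux.B4A : ArithmeticFunction ℕ) : ArithmeticFunction ℂ)) s := by
    rw [hB4Aeqc]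
    exact ArithmeticFunction.LSeriesSummable_mul hGc hz'
  have hB4sum : LSeriesSummable (fun m => ((B4Aux.B4A m : ℕ) : ℂ)) s := by
    rw [← hcoe]; exact hB4c
  -- Part 1 : real summability
  have hre : Summable (fun n => if n = 0 then (0 : ℝ) else (B4Aux.B4A n : ℝ) / (n : ℝ) ^ s) :=
    B4Aux.summable_real hB4sum
  have h1 : Summable (fun n : ℕ => (B4 (n + 1) : ℝ) / ((n : ℝ) + 1) ^ s) := by
    refine ((summable_nat_add_iff 1).mpr hre).congr fun n => ?_
    rw [if_neg (Nat.succ_ne_zero n), B4Aux.B4A_apply (Nat.succ_ne_zero n), Nat.cast_add,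
      Nat.cast_one]
  refine ⟨h1, ?_⟩
  -- Euler product for `G`
  have hf1 : term B4Aux.Gf s 1 = 1 := by
    rw [term_of_ne_zero one_ne_zero]
    simp [B4Aux.Gf, B4Aux.hG.map_one]
  have hmul : ∀ {m n : ℕ}, Nat.Coprime m n →
      term B4Aux.Gf s (m * n) = term B4Aux.Gf s m * term B4Aux.Gf s n := by
    intro m n hmn
    rcases eq_or_ne m 0 with rfl | hm
    · rw [zero_mul, term_zero, zero_mul]
    rcases eq_or_ne n 0 with rfl | hn
    · rw [mul_zero, term_zero, mul_zero]
    rw [term_of_ne_zero hm, term_of_ne_zero hn, term_of_ne_zero (mul_ne_zero hm hn),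
      div_mul_div_comm]
    congr 1
    · show ((B4Aux.G (m * n) : ℕ) : ℂ) = ((B4Aux.G m : ℕ) : ℂ) * ((B4Aux.G n : ℕ) : ℂ)
      rw [← Nat.cast_mul, B4Aux.hG.map_mul_of_coprime hmn]
    · simpa only [Nat.cast_mul, Complex.ofReal_natCast]
        using Complex.mul_cpow_ofReal_nonneg m.cast_nonneg n.cast_nonneg (s : ℂ)
  have hEuler := EulerProduct.eulerProduct_tprod (f := term B4Aux.Gf s) hf1 hmul hGnorm
    (term_zero B4Aux.Gf s)
  -- the local factors
  have hlocal : ∀ p : Nat.Primes, (∑' e : ℕ, term B4Aux.Gf s ((p : ℕ) ^ e)) =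
      (if (p : ℕ) % 4 = 1 then
        (1 + 3 * ((p : ℕ) : ℂ) ^ (-(s : ℂ))) / (1 - ((p : ℕ) : ℂ) ^ (-(s : ℂ)))
      else 1) := by
    rintro ⟨p, hp⟩
    dsimp only
    have hx : ‖(p : ℂ) ^ (-(s : ℂ))‖ < 1 :=
      B4Aux.norm_cpow_neg_lt_one hp.one_lt (lt_trans one_pos hs)
    have hx1 : (1 : ℂ) - (p : ℂ) ^ (-(s : ℂ)) ≠ 0 := by
      intro h
      rw [sub_eq_zero] at h
      rw [← h] at hx
      simp at hx
    have hsum : Summable (fun e : ℕ => term B4Aux.Gf s (p ^ e)) :=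
      (Summable.of_norm hGnorm).comp_injective (Nat.pow_right_injective hp.two_le)
    have he : ∀ e : ℕ, term B4Aux.Gf s (p ^ (e + 1)) =
        (if p % 4 = 1 then (4 : ℂ) else 0) * ((p : ℂ) ^ (-(s : ℂ))) ^ (e + 1) := by
      intro e
      rw [term_of_ne_zero (pow_ne_zero _ hp.pos.ne'), B4Aux.pow_cpow_neg s (e + 1),
        Complex.cpow_neg, ← div_eq_mul_inv]
      show ((B4Aux.G (p ^ (e + 1)) : ℕ) : ℂ) / _ = _
      rw [B4Aux.G_pp hp (Nat.succ_ne_zero e)]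
      congr 1
      split <;> norm_num
    have h0 : term B4Aux.Gf s (p ^ 0) = 1 := by rw [pow_zero]; exact hf1
    have hgeo : ∑' e : ℕ, ((p : ℂ) ^ (-(s : ℂ))) ^ (e + 1) =
        (p : ℂ) ^ (-(s : ℂ)) * (1 - (p : ℂ) ^ (-(s : ℂ)))⁻¹ := by
      calc ∑' e : ℕ, ((p : ℂ) ^ (-(s : ℂ))) ^ (e + 1)
          = ∑' e : ℕ, (p : ℂ) ^ (-(s : ℂ)) * ((p : ℂ) ^ (-(s : ℂ))) ^ e :=
            tsum_congr fun e => by ring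
        _ = (p : ℂ) ^ (-(s : ℂ)) * ∑' e : ℕ, ((p : ℂ) ^ (-(s : ℂ))) ^ e := tsum_mul_left
        _ = (p : ℂ) ^ (-(s : ℂ)) * (1 - (p : ℂ) ^ (-(s : ℂ)))⁻¹ := by
            rw [tsum_geometric_of_norm_lt_one hx]
    rw [Summable.tsum_eq_zero_add hsum, h0, tsum_congr he, tsum_mul_left, hgeo]
    by_cases h4 : p % 4 = 1
    · rw [if_pos h4, if_pos h4]
      field_simp
      ring
    · rw [if_neg h4, if_neg h4]
      simp
  -- rewrite the left-hand side as an L-series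
  have hLHS : (∑' n : ℕ, (B4 (n + 1) : ℂ) / ((n : ℂ) + 1) ^ (s : ℂ)) =
      LSeries (fun m => ((B4Aux.B4A m : ℕ) : ℂ)) s := by
    rw [show LSeries (fun m => ((B4Aux.B4A m : ℕ) : ℂ)) s =
        ∑' n, term (fun m => ((B4Aux.B4A m : ℕ) : ℂ)) s n from rfl,
      Summable.tsum_eq_zero_add hB4sum, term_zero, zero_add]
    refine tsum_congr fun n => ?_
    rw [term_of_ne_zero (Nat.succ_ne_zero n), B4Aux.B4A_apply (Nat.succ_ne_zero n),
      Nat.succ_eq_add_one, Nat.cast_add, Nat.cast_one]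
  have hz_eq : LSeries (⇑((ζ : ArithmeticFunction ℕ) : ArithmeticFunction ℂ)) s =
      riemannZeta s := by
    rw [hcoe]
    exact LSeries_zeta_eq_riemannZeta hs1
  have hG_eq : LSeries (⇑((B4Aux.G : ArithmeticFunction ℕ) : ArithmeticFunction ℂ)) s =
      LSeries B4Aux.Gf s := by
    rw [hcoe]
    rfl
  have hmulLS : LSeries (fun m => ((B4Aux.B4A m : ℕ) : ℂ)) s =
      LSeries B4Aux.Gf s * riemannZeta s := by
    rw [← hcoe B4Aux.B4A, hB4Aeqc, ArithmeticFunction.LSeries_mul' hGc hz', hz_eq, hG_eq]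
  rw [hLHS, hmulLS, mul_comm]
  congr 1
  exact Eq.trans hEuler.symm (tprod_congr hlocal)
end

section
/- For N = 5, 10, 13, or 25, the short exact sequence 1 → {±1} → Γ₀(N) → PΓ₀(N) → 1 is non-split, i.e., there is no subgroup of Γ₀(N) mapping isomorphically onto Γ₀(N)/{±I}. Equivalently stated group-theoretically: there is no subgroup H ≤ Γ₀(N) of index 2 with −I ∉ H. -/
open CongruenceSubgroup

private def mkSL (a b c d : ℤ) (h : a * d - b * c = 1) :
    Matrix.SpecialLinearGroup (Fin 2) ℤ :=
  ⟨!![a, b; c, d], by simp [Matrix.det_fin_two, h]⟩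

private lemma aux (N : ℕ) (g : Matrix.SpecialLinearGroup (Fin 2) ℤ)
    (hg : g ∈ Gamma0 N) (hsq : g * g = -1) :
    ¬ ∃ H : Subgroup (Matrix.SpecialLinearGroup (Fin 2) ℤ),
        H ≤ Gamma0 N ∧ H.relIndex (Gamma0 N) = 2 ∧
          (-1 : Matrix.SpecialLinearGroup (Fin 2) ℤ) ∉ H := by
  rintro ⟨H, hle, hidx, hnot⟩
  have h2 : (H.subgroupOf (Gamma0 N)).index = 2 := hidx
  have := Subgroup.mul_self_mem_of_index_two h2 ⟨g, hg⟩
  rw [Subgroup.mem_subgroupOf] at this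
  exact hnot (by simpa [hsq] using this)

/-- For `N = 5, 10, 13, 25`, the sequence `1 → {±1} → Γ₀(N) → PΓ₀(N) → 1` is non-split:
there is no subgroup `H ≤ Γ₀(N)` of index 2 in `Γ₀(N)` with `−I ∉ H`. -/
theorem stmt_9 (N : ℕ) (hN : N ∈ ({5, 10, 13, 25} : Finset ℕ)) :
    ¬ ∃ H : Subgroup (Matrix.SpecialLinearGroup (Fin 2) ℤ),
        H ≤ Gamma0 N ∧ H.relIndex (Gamma0 N) = 2 ∧
          (-1 : Matrix.SpecialLinearGroup (Fin 2) ℤ) ∉ H := by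
  fin_cases hN
  · exact aux 5 (mkSL 2 (-1) 5 (-2) (by norm_num))
      (by rw [Gamma0_mem]; simp [mkSL]; decide)
      (by ext i j; fin_cases i <;> fin_cases j <;>
        rfl)
  · exact aux 10 (mkSL 3 (-1) 10 (-3) (by norm_num))
      (by rw [Gamma0_mem]; simp [mkSL]; decide)
      (by ext i j; fin_cases i <;> fin_cases j <;>
        rfl)
  · exact aux 13 (mkSL 5 (-2) 13 (-5) (by norm_num))
      (by rw [Gamma0_mem]; simp [mkSL]; decide)
      (by ext i j; fin_cases i <;> fin_cases j <;>
        rfl)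
  · exact aux 25 (mkSL 7 (-2) 25 (-7) (by norm_num))
      (by rw [Gamma0_mem]; simp [mkSL]; decide)
      (by ext i j; fin_cases i <;> fin_cases j <;>
        rfl)
end

section
/- Let f, g ∈ ℤ[t] be coprime polynomials of degrees r and s, and let m, n be coprime positive integers with max(r/2, s/3) = n/m. Then for every prime p there exists a constant K_p ≥ 0, with K_p = 0 for all but finitely many p, such that for all t ∈ ℚ with v_p(t) < 0: |max(⌈−v_p(f(t))/2⌉, ⌈−v_p(g(t))/3⌉) − ⌈−(n/m)·v_p(t)⌉| ≤ K_p, where v_p denotes the p-adic valuation. -/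
open Polynomial

section aux
variable {p : ℕ} [hp : Fact p.Prime]

lemma aux_le_sum {ι : Type*} (s : Finset ι) (x : ι → ℚ) (c : ℤ)
    (h : ∀ i ∈ s, x i ≠ 0 → c ≤ padicValRat p (x i)) (hs : ∑ i ∈ s, x i ≠ 0) :
    c ≤ padicValRat p (∑ i ∈ s, x i) := by
  induction s using Finset.cons_induction with
  | empty => simp at hs
  | cons a s ha ih =>
    rw [Finset.sum_cons] at hs ⊢
    by_cases hxa : x a = 0
    · rw [hxa, zero_add] at hs ⊢
      exact ih (fun i hi => h i (Finset.mem_cons_of_mem hi)) hs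
    by_cases hrest : ∑ i ∈ s, x i = 0
    · rw [hrest, add_zero] at hs ⊢
      exact h a (Finset.mem_cons_self a s) hxa
    refine le_trans (le_min (h a (Finset.mem_cons_self a s) hxa)
      (ih (fun i hi => h i (Finset.mem_cons_of_mem hi)) hrest)) ?_
    exact padicValRat.min_le_padicValRat_add hs

lemma aux_lt_sum {ι : Type*} (s : Finset ι) (x : ι → ℚ) (c : ℤ)
    (h : ∀ i ∈ s, x i ≠ 0 → c < padicValRat p (x i)) (hs : ∑ i ∈ s, x i ≠ 0) :
    c < padicValRat p (∑ i ∈ s, x i) := by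
  induction s using Finset.cons_induction with
  | empty => simp at hs
  | cons a s ha ih =>
    rw [Finset.sum_cons] at hs ⊢
    by_cases hxa : x a = 0
    · rw [hxa, zero_add] at hs ⊢
      exact ih (fun i hi => h i (Finset.mem_cons_of_mem hi)) hs
    by_cases hrest : ∑ i ∈ s, x i = 0
    · rw [hrest, add_zero] at hs ⊢
      exact h a (Finset.mem_cons_self a s) hxa
    refine lt_of_lt_of_le (lt_min (h a (Finset.mem_cons_self a s) hxa)
      (ih (fun i hi => h i (Finset.mem_cons_of_mem hi)) hrest)) ?_
    exact padicValRat.min_le_padicValRat_add hs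

lemma aux_exists_coeff_bound (u : ℚ[X]) :
    ∃ c : ℤ, ∀ i, u.coeff i ≠ 0 → c ≤ padicValRat p (u.coeff i) := by
  by_cases hu : u = 0
  · exact ⟨0, fun i hi => absurd (by simp [hu]) hi⟩
  · refine ⟨(u.support.image (fun i => padicValRat p (u.coeff i))).min'
      (Finset.Nonempty.image (Polynomial.nonempty_support_iff.mpr hu) _), fun i hi => ?_⟩
    exact Finset.min'_le _ _ (Finset.mem_image_of_mem _ (Polynomial.mem_support_iff.mpr hi))

lemma aux_eval_lower (u : ℚ[X]) (c : ℤ)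
    (hc : ∀ i, u.coeff i ≠ 0 → c ≤ padicValRat p (u.coeff i)) (t : ℚ) (ht : t ≠ 0)
    (htv : padicValRat p t ≤ 0) (hu : u.eval t ≠ 0) :
    c + u.natDegree * padicValRat p t ≤ padicValRat p (u.eval t) := by
  rw [Polynomial.eval_eq_sum_range] at hu ⊢
  refine aux_le_sum _ _ _ (fun i hi hne => ?_) hu
  have hco : u.coeff i ≠ 0 := fun h => hne (by simp [h])
  have hti : t ^ i ≠ 0 := pow_ne_zero _ ht
  rw [padicValRat.mul hco hti, padicValRat.pow t]
  have h1 : c ≤ padicValRat p (u.coeff i) := hc i hco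
  have h2 : (u.natDegree : ℤ) * padicValRat p t ≤ (i : ℤ) * padicValRat p t := by
    apply mul_le_mul_of_nonpos_right _ htv
    exact_mod_cast Nat.lt_succ_iff.mp (Finset.mem_range.mp hi)
  omega

lemma aux_eval_leading (F : ℚ[X]) (hF : F ≠ 0)
    (hc : ∀ i, F.coeff i ≠ 0 → 0 ≤ padicValRat p (F.coeff i)) (t : ℚ) (ht : t ≠ 0)
    (htv : padicValRat p t < 0)
    (hα : padicValRat p F.leadingCoeff < -padicValRat p t) :
    F.eval t ≠ 0 ∧ padicValRat p (F.eval t) =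
      padicValRat p F.leadingCoeff + F.natDegree * padicValRat p t := by
  set d := F.natDegree with hd
  have hlc : F.coeff d ≠ 0 := by
    rw [hd]; exact Polynomial.leadingCoeff_ne_zero.mpr hF
  have hlead : F.coeff d * t ^ d ≠ 0 := mul_ne_zero hlc (pow_ne_zero _ ht)
  have hvlead : padicValRat p (F.coeff d * t ^ d) =
      padicValRat p F.leadingCoeff + d * padicValRat p t := by
    rw [padicValRat.mul hlc (pow_ne_zero _ ht), padicValRat.pow t]
    rfl
  have heval : F.eval t = (∑ i ∈ Finset.range d, F.coeff i * t ^ i) + F.coeff d * t ^ d := by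
    rw [Polynomial.eval_eq_sum_range, Finset.sum_range_succ]
  set tail := ∑ i ∈ Finset.range d, F.coeff i * t ^ i with htail
  by_cases h0 : tail = 0
  · rw [heval, h0, zero_add]
    exact ⟨hlead, hvlead⟩
  · have hstrict : padicValRat p (F.coeff d * t ^ d) < padicValRat p tail := by
      rw [hvlead]
      refine aux_lt_sum _ _ _ (fun i hi hne => ?_) h0
      have hco : F.coeff i ≠ 0 := fun h => hne (by simp [h])
      have hid : i < d := Finset.mem_range.mp hi
      rw [padicValRat.mul hco (pow_ne_zero _ ht), padicValRat.pow t]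
      have h1 : 0 ≤ padicValRat p (F.coeff i) := hc i hco
      have h2 : (d - i : ℤ) * (-padicValRat p t) ≥ 1 * (-padicValRat p t) := by
        apply mul_le_mul_of_nonneg_right _ (by omega)
        omega
      nlinarith [hα, hc d hlc]
    have hsum : tail + F.coeff d * t ^ d ≠ 0 := by
      intro h
      have : tail = -(F.coeff d * t ^ d) := by linarith [h]
      rw [this, padicValRat.neg] at hstrict
      exact lt_irrefl _ hstrict
    have hsum' : F.coeff d * t ^ d + tail ≠ 0 := by rwa [add_comm]
    refine ⟨by rw [heval, add_comm]; exact hsum', ?_⟩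
    rw [heval, add_comm tail]
    rw [padicValRat.add_eq_of_lt hsum' hlead h0 hstrict, hvlead]


lemma aux_ceil_shift (X : ℚ) (A : ℤ) (d : ℚ) (hA : 0 ≤ A) (hd : 1 ≤ d) :
    ⌈X - (A : ℚ) / d⌉ ≤ ⌈X⌉ ∧ ⌈X⌉ ≤ ⌈X - (A : ℚ) / d⌉ + A := by
  have hA' : (0 : ℚ) ≤ (A : ℚ) := by exact_mod_cast hA
  have h1 : (0:ℚ) ≤ (A : ℚ) / d := div_nonneg hA' (by linarith)
  have h2 : (A : ℚ) / d ≤ A := div_le_self hA' hd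
  constructor
  · exact Int.ceil_le_ceil (by linarith)
  · calc ⌈X⌉ ≤ ⌈X - (A : ℚ) / d + (A : ℤ)⌉ := Int.ceil_le_ceil (by push_cast; linarith)
    _ = ⌈X - (A : ℚ) / d⌉ + A := Int.ceil_add_intCast _ _

end aux

lemma aux_key (f g : Polynomial ℤ)
    (hfg : IsCoprime (f.map (Int.castRingHom ℚ)) (g.map (Int.castRingHom ℚ)))
    (hdeg : 0 < max f.natDegree g.natDegree) (m n : ℕ) (hm : 0 < m) (hn : 0 < n)
    (hmax : max ((f.natDegree : ℚ) / 2) ((g.natDegree : ℚ) / 3) = (n : ℚ) / m)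
    (p : ℕ) (hp : p.Prime) :
    ∃ Kp : ℕ, (¬ (p : ℤ) ∣ f.leadingCoeff * g.leadingCoeff → Kp = 0) ∧
      ∀ t : ℚ, t ≠ 0 → padicValRat p t < 0 →
        |max ⌈(-(padicValRat p ((f.map (Int.castRingHom ℚ)).eval t)) : ℚ) / 2⌉
            ⌈(-(padicValRat p ((g.map (Int.castRingHom ℚ)).eval t)) : ℚ) / 3⌉ -
          ⌈-((n : ℚ) / m) * (padicValRat p t : ℚ)⌉| ≤ (Kp : ℤ) := by
  haveI : Fact p.Prime := ⟨hp⟩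
  have hinj : Function.Injective (Int.castRingHom ℚ) := Int.cast_injective
  set F := f.map (Int.castRingHom ℚ) with hF
  set G := g.map (Int.castRingHom ℚ) with hG
  -- nonzeroness
  have hf0 : f ≠ 0 := by
    rintro rfl
    rw [hF, Polynomial.map_zero] at hfg
    have hu := isCoprime_zero_left.mp hfg
    have h1 : G.natDegree = 0 := natDegree_eq_zero_of_isUnit hu
    rw [hG, natDegree_map_eq_of_injective hinj] at h1
    simp [h1] at hdeg
  have hg0 : g ≠ 0 := by
    rintro rfl
    rw [hG, Polynomial.map_zero] at hfg
    have hu := isCoprime_zero_right.mp hfg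
    have h1 : F.natDegree = 0 := natDegree_eq_zero_of_isUnit hu
    rw [hF, natDegree_map_eq_of_injective hinj] at h1
    simp [h1] at hdeg
  have hF0 : F ≠ 0 := (Polynomial.map_ne_zero_iff hinj).mpr hf0
  have hG0 : G ≠ 0 := (Polynomial.map_ne_zero_iff hinj).mpr hg0
  have hFdeg : F.natDegree = f.natDegree := natDegree_map_eq_of_injective hinj f
  have hGdeg : G.natDegree = g.natDegree := natDegree_map_eq_of_injective hinj g
  have hFlc : F.leadingCoeff = ((f.leadingCoeff : ℤ) : ℚ) := leadingCoeff_map_of_injective hinj f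
  have hGlc : G.leadingCoeff = ((g.leadingCoeff : ℤ) : ℚ) := leadingCoeff_map_of_injective hinj g
  set α : ℤ := padicValRat p F.leadingCoeff with hαdef
  set β : ℤ := padicValRat p G.leadingCoeff with hβdef
  have hα0 : 0 ≤ α := by
    rw [hαdef, hFlc, padicValRat.of_int]; exact_mod_cast Nat.zero_le _
  have hβ0 : 0 ≤ β := by
    rw [hβdef, hGlc, padicValRat.of_int]; exact_mod_cast Nat.zero_le _
  have hFc : ∀ i, F.coeff i ≠ 0 → 0 ≤ padicValRat p (F.coeff i) := by
    intro i hi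
    rw [hF, Polynomial.coeff_map] at hi ⊢
    simp only [eq_intCast]
    rw [padicValRat.of_int]; exact_mod_cast Nat.zero_le _
  have hGc : ∀ i, G.coeff i ≠ 0 → 0 ≤ padicValRat p (G.coeff i) := by
    intro i hi
    rw [hG, Polynomial.coeff_map] at hi ⊢
    simp only [eq_intCast]
    rw [padicValRat.of_int]; exact_mod_cast Nat.zero_le _
  obtain ⟨u, w, huw⟩ := hfg
  obtain ⟨cu, hcu⟩ := aux_exists_coeff_bound (p := p) u
  obtain ⟨cw, hcw⟩ := aux_exists_coeff_bound (p := p) w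
  set C : ℤ := max α β with hCdef
  set D : ℤ := max (f.natDegree : ℤ) (g.natDegree : ℤ) with hDdef
  set E : ℤ := max 0 (max ((u.natDegree : ℤ) * C - cu) ((w.natDegree : ℤ) * C - cw)) with hEdef
  set Big : ℤ := α + β + E + (D + (n : ℤ)) * C with hBigdef
  have hC0 : 0 ≤ C := le_trans hα0 (le_max_left _ _)
  have hD0 : 0 ≤ D := le_trans (Int.ofNat_nonneg _) (le_max_left _ _)
  have hE0 : 0 ≤ E := le_max_left _ _
  have hBig0 : 0 ≤ Big := by
    have : 0 ≤ (D + (n : ℤ)) * C := mul_nonneg (by positivity) hC0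
    omega
  have hBigab : α + β ≤ Big := by
    have : 0 ≤ (D + (n : ℤ)) * C := mul_nonneg (by positivity) hC0
    omega
  refine ⟨if α = 0 ∧ β = 0 then 0 else Big.toNat, ?_, ?_⟩
  · intro hdvd
    have hα : α = 0 := by
      rw [hαdef, hFlc, padicValRat.of_int,
        padicValInt.eq_zero_of_not_dvd (fun h => hdvd (h.mul_right _))]
      rfl
    have hβ : β = 0 := by
      rw [hβdef, hGlc, padicValRat.of_int,
        padicValInt.eq_zero_of_not_dvd (fun h => hdvd (h.mul_left _))]
      rfl
    simp [hα, hβ]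
  intro t ht htv
  set vt : ℤ := padicValRat p t with hvtdef
  have hvt1 : vt ≤ -1 := by omega
  have hvtq : (0 : ℚ) < -(vt : ℚ) := by
    have : (vt : ℚ) < 0 := by exact_mod_cast htv
    linarith
  have hKab : (α + β : ℤ) ≤ ((if α = 0 ∧ β = 0 then 0 else Big.toNat : ℕ) : ℤ) := by
    by_cases hcase : α = 0 ∧ β = 0
    · simp [hcase]
    · simp only [hcase, if_false]
      rw [Int.toNat_of_nonneg hBig0]
      exact hBigab
  by_cases hbig : C < -vt
  · -- Case 1 : leading term dominates
    have hαlt : α < -vt := lt_of_le_of_lt (le_max_left _ _) hbig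
    have hβlt : β < -vt := lt_of_le_of_lt (le_max_right _ _) hbig
    obtain ⟨hFne, hFv⟩ := aux_eval_leading F hF0 hFc t ht htv hαlt
    obtain ⟨hGne, hGv⟩ := aux_eval_leading G hG0 hGc t ht htv hβlt
    rw [hFdeg] at hFv
    rw [hGdeg] at hGv
    set Xq : ℚ := (f.natDegree : ℚ) * (-(vt : ℚ)) / 2 with hXq
    set Yq : ℚ := (g.natDegree : ℚ) * (-(vt : ℚ)) / 3 with hYq
    have e1 : (-(padicValRat p (F.eval t)) : ℚ) / 2 = Xq - (α : ℚ) / 2 := by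
      rw [hFv, hXq]; push_cast; ring
    have e2 : (-(padicValRat p (G.eval t)) : ℚ) / 3 = Yq - (β : ℚ) / 3 := by
      rw [hGv, hYq]; push_cast; ring
    have eT : -((n : ℚ) / m) * (vt : ℚ) = max Xq Yq := by
      rw [show -((n : ℚ) / m) * (vt : ℚ) = ((n : ℚ) / m) * (-(vt : ℚ)) by ring, ← hmax,
        max_mul_of_nonneg _ _ (le_of_lt hvtq), hXq, hYq]
      congr 1 <;> ring
    have hceilmax : ⌈max Xq Yq⌉ = max ⌈Xq⌉ ⌈Yq⌉ := by
      rcases le_total Xq Yq with h | h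
      · rw [max_eq_right h, max_eq_right (Int.ceil_le_ceil h)]
      · rw [max_eq_left h, max_eq_left (Int.ceil_le_ceil h)]
    rw [e1, e2, eT, hceilmax]
    obtain ⟨l1, l2⟩ := aux_ceil_shift Xq α 2 hα0 (by norm_num)
    obtain ⟨l3, l4⟩ := aux_ceil_shift Yq β 3 hβ0 (by norm_num)
    have hma := le_max_left ⌈Xq - (α : ℚ) / 2⌉ ⌈Yq - (β : ℚ) / 3⌉
    have hmb := le_max_right ⌈Xq - (α : ℚ) / 2⌉ ⌈Yq - (β : ℚ) / 3⌉
    have hub : max ⌈Xq - (α : ℚ) / 2⌉ ⌈Yq - (β : ℚ) / 3⌉ ≤ max ⌈Xq⌉ ⌈Yq⌉ :=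
      max_le_max l1 l3
    have hlb : max ⌈Xq⌉ ⌈Yq⌉ ≤ max ⌈Xq - (α : ℚ) / 2⌉ ⌈Yq - (β : ℚ) / 3⌉ + (α + β) := by
      apply max_le <;> linarith
    refine le_trans (abs_le.mpr ⟨by linarith, by linarith⟩) hKab
  · -- Case 2 : small valuation
    push_neg at hbig
    have hC1 : 1 ≤ C := by omega
    have hnotzero : ¬(α = 0 ∧ β = 0) := by
      rintro ⟨h1, h2⟩
      rw [hCdef, h1, h2] at hC1
      simp at hC1
    have hKp : ((if α = 0 ∧ β = 0 then 0 else Big.toNat : ℕ) : ℤ) = Big := by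
      simp only [hnotzero, if_false]
      exact Int.toNat_of_nonneg hBig0
    rw [hKp]
    have hid : u.eval t * F.eval t + w.eval t * G.eval t = 1 := by
      have := congrArg (Polynomial.eval t) huw
      simpa using this
    have hu_lb : u.eval t ≠ 0 → cu - (u.natDegree : ℤ) * C ≤ padicValRat p (u.eval t) := by
      intro h
      have h1 := aux_eval_lower u cu hcu t ht (le_of_lt htv) h
      have h2 : (u.natDegree : ℤ) * (-C) ≤ (u.natDegree : ℤ) * vt :=
        mul_le_mul_of_nonneg_left (by omega) (Int.ofNat_nonneg _)
      linarith
    have hw_lb : w.eval t ≠ 0 → cw - (w.natDegree : ℤ) * C ≤ padicValRat p (w.eval t) := by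
      intro h
      have h1 := aux_eval_lower w cw hcw t ht (le_of_lt htv) h
      have h2 : (w.natDegree : ℤ) * (-C) ≤ (w.natDegree : ℤ) * vt :=
        mul_le_mul_of_nonneg_left (by omega) (Int.ofNat_nonneg _)
      linarith
    have hEu : (u.natDegree : ℤ) * C - cu ≤ E := le_trans (le_max_left _ _) (le_max_right _ _)
    have hEw : (w.natDegree : ℤ) * C - cw ≤ E := le_trans (le_max_right _ _) (le_max_right _ _)
    have hdisj : (F.eval t ≠ 0 ∧ padicValRat p (F.eval t) ≤ E) ∨
        (G.eval t ≠ 0 ∧ padicValRat p (G.eval t) ≤ E) := by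
      by_cases hA0 : u.eval t * F.eval t = 0
      · right
        rw [hA0, zero_add] at hid
        have hw : w.eval t ≠ 0 := fun h => by simp [h] at hid
        have hGt : G.eval t ≠ 0 := fun h => by simp [h] at hid
        have hv : padicValRat p (w.eval t) + padicValRat p (G.eval t) = 0 := by
          rw [← padicValRat.mul hw hGt, hid, padicValRat.one]
        have := hw_lb hw
        exact ⟨hGt, by linarith⟩
      by_cases hB0 : w.eval t * G.eval t = 0
      · left
        rw [hB0, add_zero] at hid
        have hu : u.eval t ≠ 0 := fun h => by simp [h] at hid
        have hFt : F.eval t ≠ 0 := fun h => by simp [h] at hid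
        have hv : padicValRat p (u.eval t) + padicValRat p (F.eval t) = 0 := by
          rw [← padicValRat.mul hu hFt, hid, padicValRat.one]
        have := hu_lb hu
        exact ⟨hFt, by linarith⟩
      · have hmin := padicValRat.min_le_padicValRat_add (p := p)
          (q := u.eval t * F.eval t) (r := w.eval t * G.eval t) (by rw [hid]; exact one_ne_zero)
        rw [hid, padicValRat.one] at hmin
        obtain ⟨hu, hFt⟩ := mul_ne_zero_iff.mp hA0
        obtain ⟨hw, hGt⟩ := mul_ne_zero_iff.mp hB0
        rcases min_le_iff.mp hmin with hA | hB
        · left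
          rw [padicValRat.mul hu hFt] at hA
          have := hu_lb hu
          exact ⟨hFt, by linarith⟩
        · right
          rw [padicValRat.mul hw hGt] at hB
          have := hw_lb hw
          exact ⟨hGt, by linarith⟩
    -- upper bounds for the two ceiling terms
    have hDC0 : (0 : ℤ) ≤ D * C := mul_nonneg hD0 hC0
    have ha_ub : ⌈(-(padicValRat p (F.eval t)) : ℚ) / 2⌉ ≤ D * C := by
      by_cases hFt : F.eval t = 0
      · rw [hFt, padicValRat.zero]
        norm_num
        exact hDC0
      · have h1 := aux_eval_lower F 0 hFc t ht (le_of_lt htv) hFt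
        rw [hFdeg, zero_add] at h1
        have h2 : (f.natDegree : ℤ) * (-C) ≤ (f.natDegree : ℤ) * vt :=
          mul_le_mul_of_nonneg_left (by omega) (Int.ofNat_nonneg _)
        have h3 : -(padicValRat p (F.eval t)) ≤ D * C := by
          have h4 : (f.natDegree : ℤ) * C ≤ D * C :=
            mul_le_mul_of_nonneg_right (le_max_left _ _) hC0
          linarith
        rw [Int.ceil_le]
        have h5 : ((-(padicValRat p (F.eval t)) : ℤ) : ℚ) ≤ ((D * C : ℤ) : ℚ) := by
          exact_mod_cast h3
        have h6 : ((0 : ℤ) : ℚ) ≤ ((D * C : ℤ) : ℚ) := by exact_mod_cast hDC0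
        push_cast at h5 h6 ⊢
        linarith
    have hb_ub : ⌈(-(padicValRat p (G.eval t)) : ℚ) / 3⌉ ≤ D * C := by
      by_cases hGt : G.eval t = 0
      · rw [hGt, padicValRat.zero]
        norm_num
        exact hDC0
      · have h1 := aux_eval_lower G 0 hGc t ht (le_of_lt htv) hGt
        rw [hGdeg, zero_add] at h1
        have h2 : (g.natDegree : ℤ) * (-C) ≤ (g.natDegree : ℤ) * vt :=
          mul_le_mul_of_nonneg_left (by omega) (Int.ofNat_nonneg _)
        have h3 : -(padicValRat p (G.eval t)) ≤ D * C := by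
          have h4 : (g.natDegree : ℤ) * C ≤ D * C :=
            mul_le_mul_of_nonneg_right (le_max_right _ _) hC0
          linarith
        rw [Int.ceil_le]
        have h5 : ((-(padicValRat p (G.eval t)) : ℤ) : ℚ) ≤ ((D * C : ℤ) : ℚ) := by
          exact_mod_cast h3
        have h6 : ((0 : ℤ) : ℚ) ≤ ((D * C : ℤ) : ℚ) := by exact_mod_cast hDC0
        push_cast at h5 h6 ⊢
        linarith
    -- lower bound for the max
    have hM_lb : -E ≤ max ⌈(-(padicValRat p (F.eval t)) : ℚ) / 2⌉
        ⌈(-(padicValRat p (G.eval t)) : ℚ) / 3⌉ := by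
      rcases hdisj with ⟨hFt, hvF⟩ | ⟨hGt, hvG⟩
      · refine le_trans ?_ (le_max_left _ _)
        have harg : ((-E : ℤ) : ℚ) ≤ (-(padicValRat p (F.eval t)) : ℚ) / 2 := by
          have h5 : ((-E : ℤ) : ℚ) ≤ ((-(padicValRat p (F.eval t)) : ℤ) : ℚ) := by
            exact_mod_cast (by omega : (-E : ℤ) ≤ -(padicValRat p (F.eval t)))
          have h6 : ((0 : ℤ) : ℚ) ≤ ((E : ℤ) : ℚ) := by exact_mod_cast hE0
          push_cast at h5 h6 ⊢
          linarith
        calc (-E : ℤ) = ⌈((-E : ℤ) : ℚ)⌉ := (Int.ceil_intCast _).symm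
          _ ≤ _ := Int.ceil_le_ceil harg
      · refine le_trans ?_ (le_max_right _ _)
        have harg : ((-E : ℤ) : ℚ) ≤ (-(padicValRat p (G.eval t)) : ℚ) / 3 := by
          have h5 : ((-E : ℤ) : ℚ) ≤ ((-(padicValRat p (G.eval t)) : ℤ) : ℚ) := by
            exact_mod_cast (by omega : (-E : ℤ) ≤ -(padicValRat p (G.eval t)))
          have h6 : ((0 : ℤ) : ℚ) ≤ ((E : ℤ) : ℚ) := by exact_mod_cast hE0
          push_cast at h5 h6 ⊢
          linarith
        calc (-E : ℤ) = ⌈((-E : ℤ) : ℚ)⌉ := (Int.ceil_intCast _).symm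
          _ ≤ _ := Int.ceil_le_ceil harg
    -- target bounds
    have hT1 : 1 ≤ ⌈-((n : ℚ) / m) * (vt : ℚ)⌉ := by
      have : (0 : ℚ) < -((n : ℚ) / m) * (vt : ℚ) := by
        rw [show -((n : ℚ) / m) * (vt : ℚ) = ((n : ℚ) / m) * (-(vt : ℚ)) by ring]
        exact mul_pos (div_pos (by exact_mod_cast hn) (by exact_mod_cast hm)) hvtq
      exact Int.lt_ceil.mpr (by exact_mod_cast this)
    have hT2 : ⌈-((n : ℚ) / m) * (vt : ℚ)⌉ ≤ (n : ℤ) * C := by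
      rw [Int.ceil_le]
      have hnm0 : (0 : ℚ) ≤ (n : ℚ) / m := div_nonneg (by positivity) (by positivity)
      have hvtC : (-(vt : ℚ)) ≤ (C : ℚ) := by exact_mod_cast hbig
      have hCq : (0 : ℚ) ≤ (C : ℚ) := by exact_mod_cast hC0
      have hmn1 : (n : ℚ) / m ≤ (n : ℚ) := div_le_self (by positivity) (by exact_mod_cast hm)
      calc -((n : ℚ) / m) * (vt : ℚ) = ((n : ℚ) / m) * (-(vt : ℚ)) := by ring
        _ ≤ ((n : ℚ) / m) * (C : ℚ) := mul_le_mul_of_nonneg_left hvtC hnm0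
        _ ≤ (n : ℚ) * (C : ℚ) := mul_le_mul_of_nonneg_right hmn1 hCq
        _ = (((n : ℤ) * C : ℤ) : ℚ) := by push_cast; ring
    have hMub : max ⌈(-(padicValRat p (F.eval t)) : ℚ) / 2⌉
        ⌈(-(padicValRat p (G.eval t)) : ℚ) / 3⌉ ≤ D * C := max_le ha_ub hb_ub
    have hexp : (D + (n : ℤ)) * C = D * C + (n : ℤ) * C := by ring
    rw [hBigdef]
    refine abs_le.mpr ⟨by linarith, by linarith⟩

/-- Let `f, g ∈ ℤ[t]` be coprime of degrees `r, s` with `max(r/2, s/3) = n/m` in lowest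
terms. For every prime `p` there is `K_p ≥ 0`, zero for all but finitely many `p`, with
`|max(⌈−v_p(f(t))/2⌉, ⌈−v_p(g(t))/3⌉) − ⌈−(n/m)v_p(t)⌉| ≤ K_p` whenever `v_p(t) < 0`. -/
theorem stmt_16 (f g : Polynomial ℤ)
    (hfg : IsCoprime (f.map (Int.castRingHom ℚ)) (g.map (Int.castRingHom ℚ)))
    (hdeg : 0 < max f.natDegree g.natDegree) (m n : ℕ) (hm : 0 < m) (hn : 0 < n)
    (hmn : Nat.Coprime m n)
    (hmax : max ((f.natDegree : ℚ) / 2) ((g.natDegree : ℚ) / 3) = (n : ℚ) / m) :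
    ∃ K : ℕ → ℕ, {p : ℕ | p.Prime ∧ K p ≠ 0}.Finite ∧
      ∀ p : ℕ, p.Prime → ∀ t : ℚ, t ≠ 0 → padicValRat p t < 0 →
        |max ⌈(-(padicValRat p ((f.map (Int.castRingHom ℚ)).eval t)) : ℚ) / 2⌉
            ⌈(-(padicValRat p ((g.map (Int.castRingHom ℚ)).eval t)) : ℚ) / 3⌉ -
          ⌈-((n : ℚ) / m) * (padicValRat p t : ℚ)⌉| ≤ (K p : ℤ) := by
  have hinj : Function.Injective (Int.castRingHom ℚ) := Int.cast_injective
  have hf0 : f ≠ 0 := by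
    rintro rfl
    rw [Polynomial.map_zero] at hfg
    have hu := isCoprime_zero_left.mp hfg
    have h1 := Polynomial.natDegree_eq_zero_of_isUnit hu
    rw [Polynomial.natDegree_map_eq_of_injective hinj] at h1
    simp [h1] at hdeg
  have hg0 : g ≠ 0 := by
    rintro rfl
    rw [Polynomial.map_zero] at hfg
    have hu := isCoprime_zero_right.mp hfg
    have h1 := Polynomial.natDegree_eq_zero_of_isUnit hu
    rw [Polynomial.natDegree_map_eq_of_injective hinj] at h1
    simp [h1] at hdeg
  have hN : (f.leadingCoeff * g.leadingCoeff).natAbs ≠ 0 := by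
    simp only [ne_eq, Int.natAbs_eq_zero, mul_eq_zero, Polynomial.leadingCoeff_eq_zero]
    tauto
  refine ⟨fun p => if h : p.Prime then
      (aux_key f g hfg hdeg m n hm hn hmax p h).choose else 0, ?_, ?_⟩
  · apply Set.Finite.subset (Set.finite_Iic ((f.leadingCoeff * g.leadingCoeff).natAbs))
    rintro p ⟨hpp, hK⟩
    simp only [dif_pos hpp] at hK
    have spec := (aux_key f g hfg hdeg m n hm hn hmax p hpp).choose_spec
    by_contra hle
    simp only [Set.mem_Iic, not_le] at hle
    apply hK
    apply spec.1
    intro hdvd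
    have hpdvd : p ∣ (f.leadingCoeff * g.leadingCoeff).natAbs := Int.natCast_dvd.mp hdvd
    exact absurd (Nat.le_of_dvd (Nat.pos_of_ne_zero hN) hpdvd) (not_le.mpr hle)
  · intro p hpp t ht htv
    simp only [dif_pos hpp]
    exact (aux_key f g hfg hdeg m n hm hn hmax p hpp).choose_spec.2 t ht htv
end
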